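/- Let X be a real Banach space and let x ∈ S_X be a Daugavet point. Then for every slice S of B_X and every ε > 0 there exists a slice T of B_X with T ⊆ S such that ‖x − z‖ > 2 − ε for every z ∈ T. -/

import Mathlib

set_option maxHeartbeats 1000000


variable {X : Type*} [NormedAddCommGroup X] [NormedSpace ℝ X] [CompleteSpace X]

/-- The slice `S(f, α)` of the closed unit ball of `X`. -/
def ballSlice (f : X →L[ℝ] ℝ) (α : ℝ) : Set X := {y | ‖y‖ ≤ 1 ∧ f y > 1 - α}

/-- `x` is a Daugavet point: for every slice of the unit ball and every `ε > 0`
there is a point of the slice at distance `> 2 - ε` from `x`. -/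
def IsDaugavetPoint (x : X) : Prop :=
  ∀ (f : X →L[ℝ] ℝ), ‖f‖ = 1 → ∀ α : ℝ, 0 < α →
    ∀ ε : ℝ, 0 < ε → ∃ y ∈ ballSlice f α, ‖x - y‖ > 2 - ε

theorem daugavet_point_nested_slices (x : X) (hx : ‖x‖ = 1) (hD : IsDaugavetPoint x)
    (f : X →L[ℝ] ℝ) (hf : ‖f‖ = 1) (α : ℝ) (hα : 0 < α) (ε : ℝ) (hε : 0 < ε) :
    ∃ (g : X →L[ℝ] ℝ) (α₁ : ℝ), ‖g‖ = 1 ∧ 0 < α₁ ∧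
      ballSlice g α₁ ⊆ ballSlice f α ∧ ∀ z ∈ ballSlice g α₁, ‖x - z‖ > 2 - ε := by
  have bound : ∀ (φ : X →L[ℝ] ℝ) (w : X), ‖φ‖ = 1 → ‖w‖ ≤ 1 → φ w ≤ 1 := by
    intro φ w hφ hw
    have h1 := φ.le_opNorm w
    rw [hφ, one_mul] at h1
    calc φ w ≤ ‖φ w‖ := le_abs_self _
      _ ≤ ‖w‖ := h1
      _ ≤ 1 := hw
  set t : ℝ := min (min α ε) 1 / 8 with ht_def
  have hmα : min (min α ε) 1 ≤ α := le_trans (min_le_left _ _) (min_le_left _ _)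
  have hmε : min (min α ε) 1 ≤ ε := le_trans (min_le_left _ _) (min_le_right _ _)
  have hm1 : min (min α ε) 1 ≤ 1 := min_le_right _ _
  have ht : 0 < t := by
    have : 0 < min (min α ε) 1 := lt_min (lt_min hα hε) one_pos
    positivity
  have htα : t ≤ α / 8 := by rw [ht_def]; linarith
  have htε : t ≤ ε / 8 := by rw [ht_def]; linarith
  have ht1 : t ≤ 1 / 8 := by rw [ht_def]; linarith
  obtain ⟨y, ⟨hy1, hy2⟩, hxy⟩ := hD f hf t ht t ht
  have hxy' : (2 : ℝ) - t < ‖y - x‖ := by rwa [norm_sub_rev] at hxy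
  have hne : y - x ≠ 0 := by
    intro h
    rw [h, norm_zero] at hxy'
    linarith
  obtain ⟨g, hg, hgyx⟩ := exists_dual_vector ℝ (y - x) (norm_ne_zero_iff.mpr hne)
  have hgyx' : (2 : ℝ) - t < g (y - x) := by rw [hgyx]; exact hxy'
  have hgsub : g (y - x) = g y - g x := by simp
  have hgy1 : g y ≤ 1 := bound g y hg hy1
  have hgx : g x ≤ t - 1 := by linarith [hgsub ▸ hgyx']
  have hgxlow : -1 ≤ g x := by
    have h1 := g.le_opNorm x
    rw [hg, one_mul, hx] at h1
    have h2 : -‖g x‖ ≤ g x := neg_abs_le _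
    linarith
  have hgy : 1 - t < g y := by linarith [hgsub ▸ hgyx']
  set c : ℝ := ‖f + g‖ with hc_def
  have hcy : f y + g y ≤ c := by
    have h1 := (f + g).le_opNorm y
    have h2 : (f + g) y = f y + g y := rfl
    have h3 : (f + g) y ≤ ‖(f + g) y‖ := le_abs_self _
    have hc0' : (0 : ℝ) ≤ c := norm_nonneg _
    nlinarith [h1, hy1]
  have hc : 2 - 2 * t < c := by linarith
  have hc0 : 0 < c := by linarith
  have hci : c * c⁻¹ = 1 := mul_inv_cancel₀ (ne_of_gt hc0)
  have hnorm1 : ‖c⁻¹ • (f + g)‖ = 1 := by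
    rw [norm_smul c⁻¹ (f + g), Real.norm_eq_abs, abs_of_pos (inv_pos.mpr hc0), ← hc_def]
    exact inv_mul_cancel₀ (ne_of_gt hc0)
  clear ht_def hmα hmε hm1
  clear_value t
  clear_value c
  refine ⟨c⁻¹ • (f + g), t, hnorm1, ht, ?_, ?_⟩
  · rintro z ⟨hz1, hz2⟩
    have hz2' : c⁻¹ * f z + c⁻¹ * g z > 1 - t := by
      simpa [ContinuousLinearMap.smul_apply, smul_eq_mul] using hz2
    have key : c * (1 - t) < f z + g z := by
      have h := mul_lt_mul_of_pos_left hz2' hc0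
      calc c * (1 - t) < c * (c⁻¹ * f z + c⁻¹ * g z) := h
        _ = c * c⁻¹ * f z + c * c⁻¹ * g z := by ring
        _ = f z + g z := by rw [hci]; ring
    have hgz1 : g z ≤ 1 := bound g z hg hz1
    have hprod : (2 - 2*t) * (1 - t) ≤ c * (1 - t) :=
      mul_le_mul_of_nonneg_right (le_of_lt hc) (by linarith)
    refine ⟨hz1, ?_⟩
    nlinarith [sq_nonneg t]
  · rintro z ⟨hz1, hz2⟩
    have hz2' : c⁻¹ * f z + c⁻¹ * g z > 1 - t := by
      simpa [ContinuousLinearMap.smul_apply, smul_eq_mul] using hz2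
    have key : c * (1 - t) < f z + g z := by
      have h := mul_lt_mul_of_pos_left hz2' hc0
      calc c * (1 - t) < c * (c⁻¹ * f z + c⁻¹ * g z) := h
        _ = c * c⁻¹ * f z + c * c⁻¹ * g z := by ring
        _ = f z + g z := by rw [hci]; ring
    have hfz1 : f z ≤ 1 := bound f z hf hz1
    have hprod : (2 - 2*t) * (1 - t) ≤ c * (1 - t) :=
      mul_le_mul_of_nonneg_right (le_of_lt hc) (by linarith)
    have hgz : g z > (2 - 2*t) * (1 - t) - 1 := by nlinarith
    have hnorm : g z - g x ≤ ‖x - z‖ := by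
      have h1 := g.le_opNorm (z - x)
      rw [hg, one_mul] at h1
      have h2 : g (z - x) = g z - g x := by simp
      have h3 : g (z - x) ≤ ‖g (z - x)‖ := le_abs_self _
      rw [norm_sub_rev]
      linarith
    nlinarith [sq_nonneg t]
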